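/- arXiv:1909.01288 — 2 statements merged into one kernel-verified Lean document; each statement's English description precedes it below -/
import Mathlib

section
/- For a linear time-invariant system dx/dt = A x + B u with A an N×N real matrix and B an N×M real matrix, if the Kalman controllability matrix C = (B, AB, A²B, …, A^{N-1}B) has rank N, then for every eigenvalue λ of A (over ℂ) the matrix (λI - A, B) (the N×(N+M) block matrix) also has rank N. -/
open Matrix

/-- Full row rank iff the left kernel is trivial. -/
lemma rank_eq_card_rows_iff_vecMul {F : Type*} [Field F] {N : ℕ} {n : Type*} [Fintype n]
    (M : Matrix (Fin N) n F) :
    M.rank = N ↔ ∀ v : Fin N → F, v ᵥ* M = 0 → v = 0 := by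
  rw [M.rank_eq_finrank_span_row]
  have h1 : LinearIndependent F (fun i => M i) ↔ Set.finrank F (Set.range M) = N := by
    rw [linearIndependent_iff_card_eq_finrank_span]
    simp [eq_comm]
  have h2 : (∀ v : Fin N → F, v ᵥ* M = 0 → v = 0) ↔ Function.Injective M.vecMul := by
    rw [← Matrix.coe_vecMulLinear]
    constructor
    · intro h
      rw [← LinearMap.ker_eq_bot]
      ext v
      simp only [LinearMap.mem_ker, Submodule.mem_bot, Matrix.vecMulLinear_apply]
      exact ⟨fun hv => h v hv, fun hv => by simp [hv]⟩
    · intro h v hv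
      have := h (a₁ := v) (a₂ := 0) (by simpa using hv)
      exact this
  rw [h2, Matrix.vecMul_injective_iff]
  exact h1.symm

/-- Kalman rank condition implies the PBH rank condition at every eigenvalue. -/
theorem kalman_implies_PBH (N M : ℕ)
    (A : Matrix (Fin N) (Fin N) ℝ) (B : Matrix (Fin N) (Fin M) ℝ)
    (hKalman :
      (Matrix.of fun i (p : Fin N × Fin M) =>
        ((A ^ (p.1 : ℕ)) * B) i p.2 : Matrix (Fin N) (Fin N × Fin M) ℝ).rank = N)
    (lam : ℂ)
    (hEig : ∃ v : Fin N → ℂ, v ≠ 0 ∧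
      (A.map (Complex.ofReal)).mulVec v = lam • v) :
    (Matrix.fromCols (lam • (1 : Matrix (Fin N) (Fin N) ℂ) - A.map Complex.ofReal)
      (B.map Complex.ofReal)).rank = N := by
  set K : Matrix (Fin N) (Fin N × Fin M) ℝ :=
    Matrix.of fun i (p : Fin N × Fin M) => ((A ^ (p.1 : ℕ)) * B) i p.2 with hKdef
  set A' : Matrix (Fin N) (Fin N) ℂ := A.map Complex.ofReal with hA'
  set B' : Matrix (Fin N) (Fin M) ℂ := B.map Complex.ofReal with hB'
  have hApow : ∀ k : ℕ, (A ^ k).map (Complex.ofReal) = A' ^ k := by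
    intro k
    induction k with
    | zero => ext i j; by_cases h : i = j <;> simp [Matrix.map_apply, Matrix.one_apply, h]
    | succ n ih =>
        rw [pow_succ, pow_succ, ← ih]
        ext i j
        simp [hA', Matrix.map_apply, Matrix.mul_apply]
  -- left kernel of K is trivial over ℝ
  have hKreal : ∀ v : Fin N → ℝ, v ᵥ* K = 0 → v = 0 :=
    (rank_eq_card_rows_iff_vecMul K).mp hKalman
  rw [rank_eq_card_rows_iff_vecMul]
  intro w hw
  rw [Matrix.vecMul_fromCols] at hw
  have hw1 : w ᵥ* (lam • (1 : Matrix (Fin N) (Fin N) ℂ) - A') = 0 := by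
    funext j; exact congrFun hw (Sum.inl j)
  have hw2 : w ᵥ* B' = 0 := by
    funext j; exact congrFun hw (Sum.inr j)
  have hwA : w ᵥ* A' = lam • w := by
    have := hw1
    rw [Matrix.vecMul_sub, sub_eq_zero] at this
    rw [← this]
    funext i
    simp [Matrix.vecMul, dotProduct, Matrix.smul_apply, Matrix.one_apply, mul_ite,
      mul_comm]
  have hwApow : ∀ k : ℕ, w ᵥ* (A' ^ k) = (lam ^ k) • w := by
    intro k
    induction k with
    | zero => simp [Matrix.vecMul_one]
    | succ n ih =>
        rw [pow_succ, ← Matrix.vecMul_vecMul, ih, Matrix.smul_vecMul, hwA, pow_succ,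
          smul_smul]
  -- w is in the left kernel of K mapped to ℂ
  have hwK : ∀ p : Fin N × Fin M, ∑ i, w i * ((K i p : ℝ) : ℂ) = 0 := by
    intro p
    have hentry : ∀ i, ((K i p : ℝ) : ℂ) = ((A' ^ (p.1 : ℕ)) * B') i p.2 := by
      intro i
      rw [← hApow, hKdef]
      simp [Matrix.map_apply, Matrix.mul_apply, hA', hB']
    simp_rw [hentry]
    have : (w ᵥ* ((A' ^ (p.1 : ℕ)) * B')) p.2 = 0 := by
      rw [← Matrix.vecMul_vecMul, hwApow, Matrix.smul_vecMul, hw2]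
      simp
    simpa [Matrix.vecMul, dotProduct] using this
  -- split into real and imaginary parts
  have hre : (fun i => (w i).re) ᵥ* K = 0 := by
    funext p
    have := congrArg Complex.re (hwK p)
    simpa [Complex.ext_iff, Matrix.vecMul, dotProduct] using this
  have him : (fun i => (w i).im) ᵥ* K = 0 := by
    funext p
    have := congrArg Complex.im (hwK p)
    simpa [Complex.ext_iff, Matrix.vecMul, dotProduct] using this
  have h1 := hKreal _ hre
  have h2 := hKreal _ him
  funext i
  have e1 : (w i).re = 0 := congrFun h1 i
  have e2 : (w i).im = 0 := congrFun h2 i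
  exact Complex.ext e1 e2
end

section
/- Let A be an N×N complex matrix and λ an eigenvalue of A with geometric multiplicity μ. If B is an N×M matrix such that the block matrix (λI - A, B) has rank N, then rank(B) ≥ μ, i.e., M ≥ μ. -/
lemma rank_fromColumns_le {N M K : ℕ} (C : Matrix (Fin N) (Fin K) ℂ)
    (B : Matrix (Fin N) (Fin M) ℂ) :
    (Matrix.fromCols C B).rank ≤ C.rank + B.rank := by
  classical
  have hsub : LinearMap.range (Matrix.fromCols C B).mulVecLin ≤
      LinearMap.range C.mulVecLin ⊔ LinearMap.range B.mulVecLin := by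
    rintro x ⟨v, rfl⟩
    have : (Matrix.fromCols C B).mulVecLin v
        = C.mulVecLin (v ∘ Sum.inl) + B.mulVecLin (v ∘ Sum.inr) := by
      simp only [Matrix.mulVecLin_apply]
      have hv : v = Sum.elim (v ∘ Sum.inl) (v ∘ Sum.inr) := by
        ext (i | i) <;> rfl
      conv_lhs => rw [hv]
      rw [Matrix.fromCols_mulVec_sumElim]
    rw [this]
    exact Submodule.add_mem_sup (LinearMap.mem_range_self _ _) (LinearMap.mem_range_self _ _)
  calc (Matrix.fromCols C B).rank
      ≤ Module.finrank ℂ ↥(LinearMap.range C.mulVecLin ⊔ LinearMap.range B.mulVecLin) :=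
        Submodule.finrank_mono hsub
    _ ≤ C.rank + B.rank := Submodule.finrank_add_le_finrank_add_finrank _ _

/-- If the PBH block matrix `(lam • I - A, B)` has full rank `N`, then the number of
control inputs (and the rank of `B`) is at least the geometric multiplicity of `lam`. -/
theorem pbh_rank_lower_bound (N M μ : ℕ)
    (A : Matrix (Fin N) (Fin N) ℂ) (lam : ℂ)
    (hEig : ∃ v : Fin N → ℂ, v ≠ 0 ∧ A.mulVec v = lam • v)
    (hμ : μ = N - (lam • (1 : Matrix (Fin N) (Fin N) ℂ) - A).rank)
    (B : Matrix (Fin N) (Fin M) ℂ)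
    (hPBH : (Matrix.fromCols (lam • (1 : Matrix (Fin N) (Fin N) ℂ) - A) B).rank = N) :
    μ ≤ B.rank ∧ μ ≤ M := by
  set C := lam • (1 : Matrix (Fin N) (Fin N) ℂ) - A with hC
  have h1 : N ≤ C.rank + B.rank := by
    have := rank_fromColumns_le C B
    rwa [hPBH] at this
  have h2 : μ ≤ B.rank := by
    omega
  exact ⟨h2, h2.trans (B.rank_le_width)⟩
end
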